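/- The marginal distribution of the extended Markov random field p((x,P(x)),(z,P(z))) ∝ ∏_{i∈V} ψ_i(x_i,P_i) · ∏_{a∈C} ψ_a(z_a,P_a)·φ_a(x_{V(a)}, z_a, P_{V(a)}), obtained by summing over the parent-set variables P, equals the weighted distribution p(z,x) ∝ w_sou^{n_*(z)} · w_info^{n_*(x)} · exp(-2γ·d_H(y,z)) over generalized codewords. Equivalently, for each generalized codeword (z,x) there is exactly one valid assignment of the variables P consistent with it, and its weight equals the stated product. -/
import Mathlib


/-- Check `a` is forcing: none of its neighbors (source bit `z a` and info bits
`x i`, `i ∈ Vnb a`) is `*` (= `none`), and the parity check is satisfied. -/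
def Forcing {n m : ℕ} (Vnb : Fin n → Finset (Fin m))
    (z : Fin n → Option (ZMod 2)) (x : Fin m → Option (ZMod 2)) (a : Fin n) : Prop :=
  (z a).isSome = true ∧ (∀ i ∈ Vnb a, (x i).isSome = true) ∧
    z a = some (∑ i ∈ Vnb a, (x i).getD 0)

/-- Check `a` is free: its source bit is `*` and at least one info-bit neighbor is `*`. -/
def Free {n m : ℕ} (Vnb : Fin n → Finset (Fin m))
    (z : Fin n → Option (ZMod 2)) (x : Fin m → Option (ZMod 2)) (a : Fin n) : Prop :=
  z a = none ∧ ∃ i ∈ Vnb a, x i = none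

/-- Generalized codeword: every check is forcing or free, and every 0/1-valued
information bit has at least two forcing check neighbors. -/
def GenCodeword {n m : ℕ} (Vnb : Fin n → Finset (Fin m))
    (z : Fin n → Option (ZMod 2)) (x : Fin m → Option (ZMod 2)) : Prop :=
  (∀ a, Forcing Vnb z x a ∨ Free Vnb z x a) ∧
  ∀ i, (x i).isSome = true →
    2 ≤ {a : Fin n | Forcing Vnb z x a ∧ i ∈ Vnb a}.ncard

open Classical in
/-- Variable compatibility for information bit `i`: value `1` if `x i ∈ {0,1}` and
`P i` consists of at least two of `i`'s check neighbors; `w_info` if `x i = *` and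
`P i = ∅`; and `0` otherwise. -/
noncomputable def psiInfo {n m : ℕ} (Vnb : Fin n → Finset (Fin m)) (winfo : ℝ)
    (x : Fin m → Option (ZMod 2)) (Px : Fin m → Finset (Fin n)) (i : Fin m) : ℝ :=
  if (x i).isSome = true ∧ Px i ⊆ Finset.univ.filter (fun a => i ∈ Vnb a) ∧
      2 ≤ (Px i).card then 1
  else if x i = none ∧ Px i = ∅ then winfo
  else 0

open Classical in
/-- Variable compatibility for source bit `a`: value `λ¹_a = exp γ` (if `y a = 1`)
resp. `λ⁰_a = exp (-γ)` when `z a = y a` resp. `z a ≠ y a` with `P a = {a}`;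
`w_sou` if `z a = *` and `P a = ∅`; and `0` otherwise. -/
noncomputable def psiSou {n : ℕ} (wsou γ : ℝ) (y : Fin n → ZMod 2)
    (z : Fin n → Option (ZMod 2)) (Pz : Fin n → Finset (Fin n)) (a : Fin n) : ℝ :=
  match z a with
  | some v => if Pz a = {a} then (if v = y a then Real.exp γ else Real.exp (-γ)) else 0
  | none => if Pz a = ∅ then wsou else 0

open Classical in
/-- Check compatibility for check `a`: value `1` iff the local configuration
`(z_a, x_{V(a)})` is valid (forcing or free) and, for every `i ∈ V(a)`,
`a ∈ P_i` iff check `a` is forcing; and `0` otherwise. -/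
noncomputable def phiChk {n m : ℕ} (Vnb : Fin n → Finset (Fin m))
    (z : Fin n → Option (ZMod 2)) (x : Fin m → Option (ZMod 2))
    (Px : Fin m → Finset (Fin n)) (a : Fin n) : ℝ :=
  if (Forcing Vnb z x a ∨ Free Vnb z x a) ∧
      (∀ i ∈ Vnb a, (a ∈ Px i ↔ Forcing Vnb z x a)) then 1 else 0

/-- Total weight of the extended Markov random field~\eqref{EqnExtendedMRF}. -/
noncomputable def mrfWeight {n m : ℕ} (Vnb : Fin n → Finset (Fin m))
    (wsou winfo γ : ℝ) (y : Fin n → ZMod 2)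
    (z : Fin n → Option (ZMod 2)) (x : Fin m → Option (ZMod 2))
    (P : (Fin m → Finset (Fin n)) × (Fin n → Finset (Fin n))) : ℝ :=
  (∏ i, psiInfo Vnb winfo x P.1 i) *
    (∏ a, psiSou wsou γ y z P.2 a) * (∏ a, phiChk Vnb z x P.1 a)

/-- Number of `*`-symbols in a configuration vector. -/
def nStar {k : ℕ} (v : Fin k → Option (ZMod 2)) : ℕ :=
  (Finset.univ.filter (fun a => v a = none)).card

/-- Hamming distortion between the source sequence `y` and the (partially starred)
source bits `z`, a `*` counting as distortion `1/2`. -/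
noncomputable def dH {n : ℕ} (y : Fin n → ZMod 2) (z : Fin n → Option (ZMod 2)) : ℝ :=
  ∑ a, (if z a = some (y a) then 0 else if z a = none then 1 / 2 else 1 : ℝ)

/-- for positive star weights, the marginal over `(z, x)` of the
extended Markov random field agrees (up to a positive constant) with the weighted
distribution `w_sou^{n_*(z)} · w_info^{n_*(x)} · exp(-2 γ d_H(y,z))` on generalized
codewords; equivalently, each generalized codeword supports exactly one valid
assignment of the parent-set variables `P`, whose weight is the stated product. -/
theorem extended_mrf_marginal {n m : ℕ} (Vnb : Fin n → Finset (Fin m))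
    (wsou winfo γ : ℝ) (hwsou : 0 < wsou) (hwinfo : 0 < winfo)
    (y : Fin n → ZMod 2) :
    ∃ c : ℝ, 0 < c ∧
      ∀ (z : Fin n → Option (ZMod 2)) (x : Fin m → Option (ZMod 2)),
        GenCodeword Vnb z x →
          (∃! P : (Fin m → Finset (Fin n)) × (Fin n → Finset (Fin n)),
            mrfWeight Vnb wsou winfo γ y z x P ≠ 0) ∧
          (∑ P : (Fin m → Finset (Fin n)) × (Fin n → Finset (Fin n)),
              mrfWeight Vnb wsou winfo γ y z x P) =
            c * wsou ^ nStar z * winfo ^ nStar x * Real.exp (-2 * γ * dH y z) := by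
  classical
  refine ⟨Real.exp (n * γ), Real.exp_pos _, fun z x hcw => ?_⟩
  set P0 : (Fin m → Finset (Fin n)) × (Fin n → Finset (Fin n)) :=
    (fun i => Finset.univ.filter (fun a => Forcing Vnb z x a ∧ i ∈ Vnb a),
     fun a => if (z a).isSome then ({a} : Finset (Fin n)) else ∅) with hP0
  have hphi : ∀ a, phiChk Vnb z x P0.1 a = 1 := by
    intro a
    unfold phiChk
    rw [if_pos]
    refine ⟨hcw.1 a, fun i hi => ?_⟩
    simp [hP0, hi]
  have hpsiI : ∀ i, psiInfo Vnb winfo x P0.1 i = if x i = none then winfo else 1 := by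
    intro i
    unfold psiInfo
    by_cases hxi : x i = none
    · have hemp : P0.1 i = ∅ := by
        simp only [hP0]
        rw [Finset.filter_eq_empty_iff]
        rintro a - ⟨hf, hia⟩
        have := hf.2.1 i hia
        rw [hxi] at this
        simp at this
      rw [if_neg (by rintro ⟨h1, -⟩; rw [hxi] at h1; simp at h1),
        if_pos ⟨hxi, hemp⟩, if_pos hxi]
    · have hs : (x i).isSome = true := by
        cases h : x i with
        | none => exact absurd h hxi
        | some v => rfl
      have hsub : P0.1 i ⊆ Finset.univ.filter (fun a => i ∈ Vnb a) := by
        intro a ha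
        simp only [hP0, Finset.mem_filter] at ha ⊢
        exact ⟨ha.1, ha.2.2⟩
      have hcard : 2 ≤ (P0.1 i).card := by
        have h2 := hcw.2 i hs
        have heq : ({a : Fin n | Forcing Vnb z x a ∧ i ∈ Vnb a}).ncard =
            (P0.1 i).card := by
          simp only [hP0]
          rw [Set.ncard_eq_toFinset_card']
          congr 1
          ext a
          simp
        omega
      rw [if_pos ⟨hs, hsub, hcard⟩, if_neg hxi]
  have hpsiS : ∀ a, psiSou wsou γ y z P0.2 a =
      Real.exp γ * (if z a = none then wsou else 1) *
        Real.exp (-2 * γ *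
          (if z a = some (y a) then 0 else if z a = none then 1 / 2 else 1 : ℝ)) := by
    intro a
    unfold psiSou
    cases hza : z a with
    | none =>
      have hp : P0.2 a = ∅ := by simp [hP0, hza]
      show (if P0.2 a = ∅ then wsou else 0) = _
      rw [hp, if_pos rfl, if_pos rfl,
        if_neg (by simp : ¬ (none : Option (ZMod 2)) = some (y a)), if_pos rfl]
      rw [mul_comm (Real.exp γ) wsou, mul_assoc, ← Real.exp_add]
      have : γ + -2 * γ * (1 / 2 : ℝ) = 0 := by ring
      rw [this, Real.exp_zero, mul_one]
    | some v =>
      have hp : P0.2 a = {a} := by simp [hP0, hza]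
      show (if P0.2 a = {a} then
          (if v = y a then Real.exp γ else Real.exp (-γ)) else 0) = _
      rw [hp, if_pos rfl, if_neg (by simp : ¬ (some v : Option (ZMod 2)) = none)]
      by_cases hv : v = y a
      · rw [if_pos hv, if_pos (by rw [hv] : (some v : Option (ZMod 2)) = some (y a))]
        rw [mul_one, mul_zero, Real.exp_zero, mul_one]
      · rw [if_neg hv,
          if_neg (fun h => hv (Option.some.inj h)),
          if_neg (by simp : ¬ (some v : Option (ZMod 2)) = none)]
        rw [mul_one, ← Real.exp_add]
        congr 1
        ring
  have hW : mrfWeight Vnb wsou winfo γ y z x P0 =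
      Real.exp (n * γ) * wsou ^ nStar z * winfo ^ nStar x *
        Real.exp (-2 * γ * dH y z) := by
    unfold mrfWeight
    rw [Finset.prod_congr rfl (fun a _ => hphi a), Finset.prod_const_one, mul_one]
    rw [Finset.prod_congr rfl (fun i _ => hpsiI i)]
    rw [Finset.prod_congr rfl (fun a _ => hpsiS a)]
    rw [Finset.prod_mul_distrib, Finset.prod_mul_distrib]
    have e1 : (∏ _a : Fin n, Real.exp γ) = Real.exp (n * γ) := by
      rw [Finset.prod_const, Finset.card_univ, Fintype.card_fin, ← Real.exp_nat_mul]
    have e2 : (∏ a : Fin n, (if z a = none then wsou else 1)) = wsou ^ nStar z := by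
      rw [Finset.prod_ite, Finset.prod_const, Finset.prod_const_one, mul_one]
      rfl
    have e3 : (∏ i : Fin m, (if x i = none then winfo else 1)) = winfo ^ nStar x := by
      rw [Finset.prod_ite, Finset.prod_const, Finset.prod_const_one, mul_one]
      rfl
    have e4 : (∏ a : Fin n, Real.exp (-2 * γ *
        (if z a = some (y a) then 0 else if z a = none then 1 / 2 else 1 : ℝ)))
        = Real.exp (-2 * γ * dH y z) := by
      rw [← Real.exp_sum]
      congr 1
      rw [dH, Finset.mul_sum]
    rw [e1, e2, e3, e4]
    ring
  have hW0 : mrfWeight Vnb wsou winfo γ y z x P0 ≠ 0 := by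
    rw [hW]
    positivity
  have huniq : ∀ P : (Fin m → Finset (Fin n)) × (Fin n → Finset (Fin n)),
      mrfWeight Vnb wsou winfo γ y z x P ≠ 0 → P = P0 := by
    intro P hP
    unfold mrfWeight at hP
    have hC : ∀ a, phiChk Vnb z x P.1 a ≠ 0 := fun a =>
      Finset.prod_ne_zero_iff.mp (right_ne_zero_of_mul hP) a (Finset.mem_univ a)
    have hAB := left_ne_zero_of_mul hP
    have hA : ∀ i, psiInfo Vnb winfo x P.1 i ≠ 0 := fun i =>
      Finset.prod_ne_zero_iff.mp (left_ne_zero_of_mul hAB) i (Finset.mem_univ i)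
    have hB : ∀ a, psiSou wsou γ y z P.2 a ≠ 0 := fun a =>
      Finset.prod_ne_zero_iff.mp (right_ne_zero_of_mul hAB) a (Finset.mem_univ a)
    have hchk : ∀ a, ∀ i ∈ Vnb a, (a ∈ P.1 i ↔ Forcing Vnb z x a) := by
      intro a
      have h := hC a
      unfold phiChk at h
      split_ifs at h with hc
      · exact hc.2
      · exact absurd rfl h
    have hx1 : P.1 = P0.1 := by
      funext i
      have hi := hA i
      unfold psiInfo at hi
      split_ifs at hi with h h'
      · ext a
        simp only [hP0, Finset.mem_filter, Finset.mem_univ, true_and]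
        constructor
        · intro ha
          have hav : i ∈ Vnb a := by
            have := h.2.1 ha
            simpa using this
          exact ⟨(hchk a i hav).mp ha, hav⟩
        · rintro ⟨hf, hav⟩
          exact (hchk a i hav).mpr hf
      · rw [h'.2]
        symm
        simp only [hP0]
        rw [Finset.filter_eq_empty_iff]
        rintro a - ⟨hf, hia⟩
        have := hf.2.1 i hia
        rw [h'.1] at this
        simp at this
      · exact absurd rfl hi
    have hx2 : P.2 = P0.2 := by
      funext a
      have ha := hB a
      unfold psiSou at ha
      cases hza : z a with
      | none =>
        rw [hza] at ha
        have hc : P.2 a = ∅ := by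
          by_contra hc
          exact ha (show (if P.2 a = ∅ then wsou else 0) = 0 from if_neg hc)
        simp [hP0, hza, hc]
      | some v =>
        rw [hza] at ha
        have hc : P.2 a = {a} := by
          by_contra hc
          exact ha (show (if P.2 a = {a} then
            (if v = y a then Real.exp γ else Real.exp (-γ)) else 0) = 0 from if_neg hc)
        simp [hP0, hza, hc]
    exact Prod.ext hx1 hx2
  refine ⟨⟨P0, hW0, huniq⟩, ?_⟩
  rw [Fintype.sum_eq_single P0 (fun P hne => by
    by_contra h
    exact hne (huniq P h)), hW]
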